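/- For every n ≥ 1, the inverse braid monoid IBₙ (presented with a single idempotent generator ε) is isomorphic to the monoid defined by the presentation with generators σᵢ, σᵢ⁻¹ (i = 1, …, n−1) and ε₁, …, εₙ, with the braid relations on the σᵢ together with: σᵢσᵢ⁻¹ = σᵢ⁻¹σᵢ = 1; εⱼσᵢ = σᵢεⱼ for j ≠ i, i+1; εᵢσᵢ = σᵢεᵢ₊₁; εᵢ₊₁σᵢ = σᵢεᵢ; εᵢ = εᵢ²; εᵢ₊₁σᵢ² = σᵢ²εᵢ₊₁ = εᵢ₊₁; and εᵢεᵢ₊₁σᵢ = σᵢεᵢεᵢ₊₁ = εᵢεᵢ₊₁; an isomorphism is given by σᵢ ↦ σᵢ and ε ↦ ε₁. -/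
import Mathlib


/-!
STATEMENT 16: For every n ≥ 1, the inverse braid monoid IBₙ (Easdown–Lavers
presentation with a single idempotent generator ε) is isomorphic to the
monoid presented with generators σᵢ, σᵢ⁻¹ (i = 1, …, n−1), ε₁, …, εₙ and the
relations listed below, via σᵢ ↦ σᵢ and ε ↦ ε₁.
-/

open FreeMonoid

/-- Generators of the Easdown–Lavers presentation of `IBₙ`: `σᵢ`, `σᵢ⁻¹`
(index `i : Fin (n-1)` stands for subscript `i+1`) and a single `ε`. -/
inductive IB1Gen (n : ℕ) : Type
  | sig (i : Fin (n - 1)) : IB1Gen n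
  | sinv (i : Fin (n - 1)) : IB1Gen n
  | eps : IB1Gen n

open IB1Gen in
/-- The Easdown–Lavers relations of the inverse braid monoid `IBₙ`. -/
inductive ib1Rel (n : ℕ) : FreeMonoid (IB1Gen n) → FreeMonoid (IB1Gen n) → Prop
  | braid_comm (i j : Fin (n - 1)) (h : i.val + 1 < j.val ∨ j.val + 1 < i.val) :
      ib1Rel n (of (sig i) * of (sig j)) (of (sig j) * of (sig i))
  | braid (i j : Fin (n - 1)) (h : j.val = i.val + 1) :
      ib1Rel n (of (sig i) * of (sig j) * of (sig i))
               (of (sig j) * of (sig i) * of (sig j))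
  | inv_right (i : Fin (n - 1)) : ib1Rel n (of (sig i) * of (sinv i)) 1
  | inv_left (i : Fin (n - 1)) : ib1Rel n (of (sinv i) * of (sig i)) 1
  | eps_comm (i : Fin (n - 1)) (h : 1 ≤ i.val) :
      ib1Rel n (of eps * of (sig i)) (of (sig i) * of eps)
  | eps_sig₁ (h : 0 < n - 1) :
      ib1Rel n (of eps * of (sig ⟨0, h⟩) * of eps)
               (of (sig ⟨0, h⟩) * of eps * of (sig ⟨0, h⟩) * of eps)
  | eps_sig₂ (h : 0 < n - 1) :
      ib1Rel n (of eps * of (sig ⟨0, h⟩) * of eps)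
               (of eps * of (sig ⟨0, h⟩) * of eps * of (sig ⟨0, h⟩))
  | idem : ib1Rel n (of eps) (of eps * of eps)
  | eps_sq₁ (h : 0 < n - 1) :
      ib1Rel n (of eps) (of eps * of (sig ⟨0, h⟩) * of (sig ⟨0, h⟩))
  | eps_sq₂ (h : 0 < n - 1) :
      ib1Rel n (of eps) (of (sig ⟨0, h⟩) * of (sig ⟨0, h⟩) * of eps)

/-- The inverse braid monoid `IBₙ` (Easdown–Lavers presentation). -/
def InvBraidMonoid₁ (n : ℕ) : Type := PresentedMonoid (ib1Rel n)

instance (n : ℕ) : Monoid (InvBraidMonoid₁ n) :=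
  inferInstanceAs (Monoid (PresentedMonoid (ib1Rel n)))

/-- Generators of the second presentation of `IBₙ`: `σᵢ`, `σᵢ⁻¹`
(`i : Fin (n-1)`) and `ε₁, …, εₙ` (as `eps j`, `j : Fin n`). -/
inductive IB2Gen (n : ℕ) : Type
  | sig (i : Fin (n - 1)) : IB2Gen n
  | sinv (i : Fin (n - 1)) : IB2Gen n
  | eps (j : Fin n) : IB2Gen n

open IB2Gen in
/-- The relations of the presentation of `IBₙ` with generators `εᵢ`. -/
inductive ib2Rel (n : ℕ) : FreeMonoid (IB2Gen n) → FreeMonoid (IB2Gen n) → Prop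
  | braid_comm (i j : Fin (n - 1)) (h : i.val + 1 < j.val ∨ j.val + 1 < i.val) :
      ib2Rel n (of (sig i) * of (sig j)) (of (sig j) * of (sig i))
  | braid (i j : Fin (n - 1)) (h : j.val = i.val + 1) :
      ib2Rel n (of (sig i) * of (sig j) * of (sig i))
               (of (sig j) * of (sig i) * of (sig j))
  | inv_right (i : Fin (n - 1)) : ib2Rel n (of (sig i) * of (sinv i)) 1
  | inv_left (i : Fin (n - 1)) : ib2Rel n (of (sinv i) * of (sig i)) 1
  | eps_comm (j : Fin n) (i : Fin (n - 1))
      (h : j.val ≠ i.val ∧ j.val ≠ i.val + 1) :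
      ib2Rel n (of (eps j) * of (sig i)) (of (sig i) * of (eps j))
  | eps_shift₁ (i : Fin (n - 1)) :
      ib2Rel n (of (eps ⟨i.val, by have := i.isLt; omega⟩) * of (sig i))
               (of (sig i) * of (eps ⟨i.val + 1, by have := i.isLt; omega⟩))
  | eps_shift₂ (i : Fin (n - 1)) :
      ib2Rel n (of (eps ⟨i.val + 1, by have := i.isLt; omega⟩) * of (sig i))
               (of (sig i) * of (eps ⟨i.val, by have := i.isLt; omega⟩))
  | idem (j : Fin n) : ib2Rel n (of (eps j)) (of (eps j) * of (eps j))
  | eps_sq₁ (i : Fin (n - 1)) :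
      ib2Rel n (of (eps ⟨i.val + 1, by have := i.isLt; omega⟩) * of (sig i) * of (sig i))
               (of (eps ⟨i.val + 1, by have := i.isLt; omega⟩))
  | eps_sq₂ (i : Fin (n - 1)) :
      ib2Rel n (of (sig i) * of (sig i) * of (eps ⟨i.val + 1, by have := i.isLt; omega⟩))
               (of (eps ⟨i.val + 1, by have := i.isLt; omega⟩))
  | eps_pair₁ (i : Fin (n - 1)) :
      ib2Rel n (of (eps ⟨i.val, by have := i.isLt; omega⟩) *
                of (eps ⟨i.val + 1, by have := i.isLt; omega⟩) * of (sig i))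
               (of (sig i) * of (eps ⟨i.val, by have := i.isLt; omega⟩) *
                of (eps ⟨i.val + 1, by have := i.isLt; omega⟩))
  | eps_pair₂ (i : Fin (n - 1)) :
      ib2Rel n (of (eps ⟨i.val, by have := i.isLt; omega⟩) *
                of (eps ⟨i.val + 1, by have := i.isLt; omega⟩) * of (sig i))
               (of (eps ⟨i.val, by have := i.isLt; omega⟩) *
                of (eps ⟨i.val + 1, by have := i.isLt; omega⟩))

/-- The inverse braid monoid `IBₙ` (presentation with the generators `εᵢ`). -/
def InvBraidMonoid₂ (n : ℕ) : Type := PresentedMonoid (ib2Rel n)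

instance (n : ℕ) : Monoid (InvBraidMonoid₂ n) :=
  inferInstanceAs (Monoid (PresentedMonoid (ib2Rel n)))

namespace IB16

theorem rel_eq {α : Type*} {rels : FreeMonoid α → FreeMonoid α → Prop}
    {a b : FreeMonoid α} (h : rels a b) :
    PresentedMonoid.mk rels a = PresentedMonoid.mk rels b :=
  Quotient.sound (ConGen.Rel.of a b h)

theorem consify {M : Type*} [Monoid M] {a b : M} (h : a = b) (z : M) : a * z = b * z := by
  rw [h]

theorem uconsify {M : Type*} [Monoid M] {a b : Mˣ} (h : a = b) (z : M) :
    (a : M) * z = (b : M) * z := by rw [h]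

theorem cmul {M : Type*} [Monoid M] {x y : M} (h : Commute x y) (z : M) :
    x * (y * z) = y * (x * z) := by rw [← mul_assoc, h.eq, mul_assoc]

abbrev M1 (n : ℕ) := PresentedMonoid (ib1Rel n)
abbrev M2 (n : ℕ) := PresentedMonoid (ib2Rel n)

def sE (n : ℕ) : M1 n := PresentedMonoid.of _ IB1Gen.eps

theorem sE_def (n : ℕ) : PresentedMonoid.of (ib1Rel n) IB1Gen.eps = sE n := rfl

def sU (n i : ℕ) : (M1 n)ˣ :=
  if h : i < n - 1 then
    { val := PresentedMonoid.of _ (IB1Gen.sig ⟨i, h⟩)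
      inv := PresentedMonoid.of _ (IB1Gen.sinv ⟨i, h⟩)
      val_inv := rel_eq (ib1Rel.inv_right ⟨i, h⟩)
      inv_val := rel_eq (ib1Rel.inv_left ⟨i, h⟩) }
  else 1

theorem sU_pos {n i : ℕ} (h : i < n - 1) :
    (↑(sU n i) : M1 n) = PresentedMonoid.of _ (IB1Gen.sig ⟨i, h⟩) := by
  simp only [sU, dif_pos h]

theorem sU_inv_pos {n i : ℕ} (h : i < n - 1) :
    (↑(sU n i)⁻¹ : M1 n) = PresentedMonoid.of _ (IB1Gen.sinv ⟨i, h⟩) := by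
  simp only [sU, dif_pos h]; rfl

theorem sU_top {n i : ℕ} (h : ¬ i < n - 1) : sU n i = 1 := dif_neg h

theorem comm_comm {n i j : ℕ} (h : i + 2 ≤ j) :
    Commute (↑(sU n i) : M1 n) ↑(sU n j) := by
  by_cases hj : j < n - 1
  · by_cases hi : i < n - 1
    · have hc : Commute (PresentedMonoid.of (ib1Rel n) (IB1Gen.sig ⟨i, hi⟩))
          (PresentedMonoid.of (ib1Rel n) (IB1Gen.sig ⟨j, hj⟩)) :=
        rel_eq (ib1Rel.braid_comm ⟨i, hi⟩ ⟨j, hj⟩ (Or.inl (show i + 1 < j by omega)))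
      rwa [← sU_pos hi, ← sU_pos hj] at hc
    · rw [sU_top hi]; simp
  · rw [sU_top hj]; simp

theorem Ecomm {n i : ℕ} (h : 1 ≤ i) : Commute (sE n) ↑(sU n i) := by
  by_cases hi : i < n - 1
  · have hc : Commute (sE n) (PresentedMonoid.of (ib1Rel n) (IB1Gen.sig ⟨i, hi⟩)) :=
      rel_eq (ib1Rel.eps_comm ⟨i, hi⟩ h)
    rwa [← sU_pos hi] at hc
  · rw [sU_top hi]; simp

end IB16
namespace IB16

theorem braid_u {n i : ℕ} (h : i + 1 < n - 1) :
    sU n i * sU n (i+1) * sU n i = sU n (i+1) * sU n i * sU n (i+1) := by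
  have hi : i < n - 1 := by omega
  apply Units.ext
  have hb := rel_eq (ib1Rel.braid ⟨i, hi⟩ ⟨i+1, h⟩ rfl)
  simp only [Units.val_mul, sU_pos hi, sU_pos h]
  exact hb

section units
variable {n i : ℕ}

theorem k1_u (h : i + 1 < n - 1) : sU n i * sU n (i+1) * (sU n i)⁻¹ = (sU n (i+1))⁻¹ * (sU n i) * sU n (i+1) := by
  have hb := braid_u h
  set x := sU n i; set y := sU n (i+1)
  calc x*y*x⁻¹ = y⁻¹*(y*x*y)*x⁻¹ := by group
    _ = y⁻¹*(x*y*x)*x⁻¹ := by rw [← hb]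
    _ = y⁻¹*x*y := by group

theorem u1_u (h : i + 1 < n - 1) : sU n i * sU n (i+1) * sU n (i+1)
    = (sU n (i+1))⁻¹ * sU n i * sU n i * sU n (i+1) * sU n i := by
  have hk := k1_u h
  set x := sU n i; set y := sU n (i+1)
  calc x*y*y = (x*y*x⁻¹)*(x*y*x⁻¹)*x := by group
    _ = (y⁻¹*x*y)*(y⁻¹*x*y)*x := by rw [hk]
    _ = y⁻¹*x*x*y*x := by group

theorem u2_u (h : i + 1 < n - 1) : sU n (i+1) * sU n (i+1) * (sU n i)⁻¹
    = (sU n i)⁻¹ * (sU n (i+1))⁻¹ * sU n i * sU n i * sU n (i+1) := by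
  have hk := k1_u h
  set x := sU n i; set y := sU n (i+1)
  calc y*y*x⁻¹ = x⁻¹*((x*y*x⁻¹)*(x*y*x⁻¹)) := by group
    _ = x⁻¹*((y⁻¹*x*y)*(y⁻¹*x*y)) := by rw [hk]
    _ = x⁻¹*y⁻¹*x*x*y := by group

theorem u3_u (h : i + 1 < n - 1) : (sU n (i+1))⁻¹ * (sU n i)⁻¹ * sU n (i+1)
    = sU n i * (sU n (i+1))⁻¹ * (sU n i)⁻¹ := by
  have hk := k1_u h
  set x := sU n i; set y := sU n (i+1)
  calc y⁻¹*x⁻¹*y = (y⁻¹*x*y)⁻¹ * (y*y⁻¹) := by group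
    _ = (x*y*x⁻¹)⁻¹ * (y*y⁻¹) := by rw [hk]
    _ = x*y⁻¹*x⁻¹ := by group

theorem u4_u (h : i + 1 < n - 1) : sU n (i+1) * (sU n i)⁻¹ * (sU n (i+1))⁻¹
    = (sU n i)⁻¹ * (sU n (i+1))⁻¹ * sU n i := by
  have hk := k1_u h
  set x := sU n i; set y := sU n (i+1)
  calc y*x⁻¹*y⁻¹ = x⁻¹*(x*y*x⁻¹)*y⁻¹ := by group
    _ = x⁻¹*(y⁻¹*x*y)*y⁻¹ := by rw [hk]
    _ = x⁻¹*y⁻¹*x := by group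

theorem braid_c (h : i + 1 < n - 1) : ∀ z : M1 n, ↑(sU n i)*(↑(sU n (i+1))*(↑(sU n i)*z))
    = ↑(sU n (i+1))*(↑(sU n i)*(↑(sU n (i+1))*z)) := by
  have hc := uconsify (braid_u h)
  simpa only [Units.val_mul, mul_assoc] using hc

theorem u1c (h : i + 1 < n - 1) : ∀ z : M1 n, ↑(sU n i)*(↑(sU n (i+1))*(↑(sU n (i+1))*z))
    = ↑(sU n (i+1))⁻¹*(↑(sU n i)*(↑(sU n i)*(↑(sU n (i+1))*(↑(sU n i)*z)))) := by
  have hc := uconsify (u1_u h)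
  simpa only [Units.val_mul, mul_assoc] using hc

theorem u2c (h : i + 1 < n - 1) : ∀ z : M1 n, ↑(sU n (i+1))*(↑(sU n (i+1))*(↑(sU n i)⁻¹*z))
    = ↑(sU n i)⁻¹*(↑(sU n (i+1))⁻¹*(↑(sU n i)*(↑(sU n i)*(↑(sU n (i+1))*z)))) := by
  have hc := uconsify (u2_u h)
  simpa only [Units.val_mul, mul_assoc] using hc

theorem u3c (h : i + 1 < n - 1) : ∀ z : M1 n, ↑(sU n (i+1))⁻¹*(↑(sU n i)⁻¹*(↑(sU n (i+1))*z))
    = ↑(sU n i)*(↑(sU n (i+1))⁻¹*(↑(sU n i)⁻¹*z)) := by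
  have hc := uconsify (u3_u h)
  simpa only [Units.val_mul, mul_assoc] using hc

theorem u4c (h : i + 1 < n - 1) : ∀ z : M1 n, ↑(sU n (i+1))*(↑(sU n i)⁻¹*(↑(sU n (i+1))⁻¹*z))
    = ↑(sU n i)⁻¹*(↑(sU n (i+1))⁻¹*(↑(sU n i)*z)) := by
  have hc := uconsify (u4_u h)
  simpa only [Units.val_mul, mul_assoc] using hc

end units

end IB16
namespace IB16

theorem mk_of {α : Type*} (rels : FreeMonoid α → FreeMonoid α → Prop) (x : α) :
    PresentedMonoid.mk rels (FreeMonoid.of x) = PresentedMonoid.of rels x := rfl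

def eE (n : ℕ) : ℕ → M1 n
  | 0 => sE n
  | j+1 => ↑(sU n j)⁻¹ * eE n j * ↑(sU n j)

theorem L1 {n : ℕ} : ∀ j i : ℕ, j + 1 ≤ i → Commute (eE n j) ↑(sU n i) := by
  intro j
  induction j with
  | zero => intro i hi; exact Ecomm hi
  | succ j ih =>
    intro i hi
    have h1 : Commute (↑(sU n j) : M1 n) ↑(sU n i) := comm_comm (by omega)
    have h2 : Commute (↑(sU n j)⁻¹ : M1 n) ↑(sU n i) := (h1.symm.units_inv_right).symm
    exact (h2.mul_left (ih i (by omega))).mul_left h1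

theorem L2 {n : ℕ} : ∀ j : ℕ,
    (∀ z : M1 n, eE n j * (↑(sU n j) * (↑(sU n j) * z)) = eE n j * z) ∧
    (∀ z : M1 n, ↑(sU n j) * (↑(sU n j) * (eE n j * z)) = eE n j * z) := by
  intro j
  induction j with
  | zero =>
    by_cases h0 : 0 < n - 1
    · constructor
      · intro z
        have hr := rel_eq (ib1Rel.eps_sq₁ h0)
        simp only [map_mul, mk_of] at hr
        rw [sE_def, ← sU_pos h0] at hr
        have hc := consify hr.symm
        simp only [mul_assoc] at hc
        simp only [eE]
        exact hc z
      · intro z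
        have hr := rel_eq (ib1Rel.eps_sq₂ h0)
        simp only [map_mul, mk_of] at hr
        rw [sE_def, ← sU_pos h0] at hr
        have hc := consify hr.symm
        simp only [mul_assoc] at hc
        simp only [eE]
        exact hc z
    · constructor <;> intro z <;>
        simp only [eE, sU_top h0, Units.val_one, one_mul]
  | succ j ih =>
    by_cases hc : j + 1 < n - 1
    · have ecy : Commute (eE n j) ↑(sU n (j+1)) := L1 j (j+1) le_rfl
      constructor
      · intro z
        simp only [eE, mul_assoc]
        rw [u1c hc, cmul ecy.units_inv_right, ih.1, cmul ecy,
          Units.inv_mul_cancel_left]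
      · intro z
        simp only [eE, mul_assoc]
        rw [u2c hc, ← cmul ecy, ih.2, cmul ecy, Units.inv_mul_cancel_left]
    · constructor <;> intro z <;>
        simp only [sU_top hc, Units.val_one, one_mul]

theorem L2c {n : ℕ} (j : ℕ) : ∀ z : M1 n,
    ↑(sU n j) * (eE n j * z) = ↑(sU n j)⁻¹ * (eE n j * z) := by
  intro z
  calc ↑(sU n j) * (eE n j * z)
      = ↑(sU n j)⁻¹ * (↑(sU n j) * (↑(sU n j) * (eE n j * z))) :=
        (Units.inv_mul_cancel_left _ _).symm
    _ = ↑(sU n j)⁻¹ * (eE n j * z) := by rw [(L2 j).2]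

theorem L2c' {n : ℕ} (j : ℕ) : ∀ z : M1 n,
    eE n j * (↑(sU n j) * z) = eE n j * (↑(sU n j)⁻¹ * z) := by
  intro z
  calc eE n j * (↑(sU n j) * z)
      = eE n j * (↑(sU n j) * (↑(sU n j) * (↑(sU n j)⁻¹ * z))) := by
        rw [Units.mul_inv_cancel_left]
    _ = eE n j * (↑(sU n j)⁻¹ * z) := (L2 j).1 _

theorem L3 {n : ℕ} (j : ℕ) : ∀ z : M1 n,
    eE n (j+1) * (↑(sU n j) * z) = ↑(sU n j) * (eE n j * z) := by
  intro z
  simp only [eE, mul_assoc]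
  rw [(L2 j).1, ← L2c j z]

theorem L3' {n : ℕ} (j : ℕ) : ∀ z : M1 n,
    eE n j * (↑(sU n j) * z) = ↑(sU n j) * (eE n (j+1) * z) := by
  intro z
  simp only [eE, mul_assoc, Units.mul_inv_cancel_left]

theorem L5 {n : ℕ} : ∀ j : ℕ, ∀ z : M1 n, eE n j * (eE n j * z) = eE n j * z := by
  intro j
  induction j with
  | zero =>
    intro z
    have hr := rel_eq (ib1Rel.idem (n := n))
    simp only [map_mul, mk_of] at hr
    rw [sE_def] at hr
    have hc := consify hr.symm
    simp only [mul_assoc] at hc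
    simp only [eE]
    exact hc z
  | succ j ih =>
    intro z
    simp only [eE, mul_assoc, Units.mul_inv_cancel_left]
    rw [ih]

end IB16
namespace IB16

theorem L4 {n : ℕ} : ∀ j : ℕ, j ≤ n - 1 → ∀ i : ℕ, i + 2 ≤ j →
    Commute (eE n j) ↑(sU n i) := by
  intro j
  induction j with
  | zero => intro _ i hi; omega
  | succ j ih =>
    intro hj i hi
    rcases Nat.lt_or_ge (i+2) (j+1) with hlt | hge
    · -- i + 2 ≤ j
      have hij : i + 2 ≤ j := by omega
      have h1 : Commute (↑(sU n i) : M1 n) ↑(sU n j) := comm_comm hij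
      have h2 : Commute (↑(sU n j)⁻¹ : M1 n) ↑(sU n i) := (h1.units_inv_right).symm
      exact (h2.mul_left (ih (by omega) i hij)).mul_left h1.symm
    · -- i + 2 = j + 1, j = i + 1
      have hj' : j = i + 1 := by omega
      subst hj'
      have hbr : i + 1 < n - 1 := by omega
      have ecy : Commute (eE n i) ↑(sU n (i+1)) := L1 i (i+1) le_rfl
      have key : ∀ z : M1 n, eE n (i+2) * (↑(sU n i) * z)
          = ↑(sU n i) * (eE n (i+2) * z) := by
        intro z
        simp only [eE, mul_assoc]
        rw [braid_c hbr, cmul ecy, u3c hbr]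
      have h := key 1
      simp only [mul_one] at h
      exact h

end IB16
namespace IB16

theorem L6 {n : ℕ} : ∀ j : ℕ,
    (∀ z : M1 n, eE n j * (eE n (j+1) * (↑(sU n j) * z)) = eE n j * (eE n (j+1) * z)) ∧
    (∀ z : M1 n, ↑(sU n j) * (eE n j * (eE n (j+1) * z)) = eE n j * (eE n (j+1) * z)) := by
  intro j
  induction j with
  | zero =>
    by_cases h0 : 0 < n - 1
    · -- genuine base case
      have r3a := rel_eq (ib1Rel.eps_sig₁ h0)
      have r3b := rel_eq (ib1Rel.eps_sig₂ h0)
      simp only [map_mul, mk_of] at r3a r3b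
      rw [sE_def, ← sU_pos h0] at r3a r3b
      have r3ac := consify r3a
      have r3bc := consify r3b
      simp only [mul_assoc] at r3ac r3bc
      have l2c := L2c (n := n) 0
      simp only [eE] at l2c
      have claim : ∀ z : M1 n, eE n 0 * (eE n 1 * z)
          = sE n * (↑(sU n 0) * (sE n * z)) := by
        intro z
        simp only [eE, mul_assoc]
        rw [← l2c, ← r3bc]
      constructor
      · intro z
        rw [claim, claim, ← r3bc]
      · intro z
        rw [claim, ← r3ac]
    · -- degenerate
      constructor <;> intro z <;>
        simp only [eE, sU_top h0, Units.val_one, inv_one, one_mul]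
  | succ j ih =>
    by_cases hc : j + 1 < n - 1
    · have ecy : Commute (eE n j) ↑(sU n (j+1)) := L1 j (j+1) le_rfl
      have claim : ∀ w : M1 n, eE n (j+1) * (eE n (j+2) * w)
          = ↑(sU n j)⁻¹ * (↑(sU n (j+1))⁻¹ *
              (eE n j * (eE n (j+1) * (↑(sU n (j+1)) * (↑(sU n j) * w))))) := by
        intro w
        simp only [eE, mul_assoc]
        rw [← u3c hc, cmul ecy.units_inv_right, ← cmul ecy, ← braid_c hc]
      constructor
      · intro z
        rw [claim, claim, ← braid_c hc, ih.1]
      · intro z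
        rw [claim, u4c hc, ih.2]
    · constructor <;> intro z <;>
        simp only [eE, sU_top hc, Units.val_one, inv_one, one_mul, mul_one]

end IB16
namespace IB16

def gfun (n : ℕ) : IB2Gen n → M1 n
  | IB2Gen.sig i => ↑(sU n i.val)
  | IB2Gen.sinv i => ↑(sU n i.val)⁻¹
  | IB2Gen.eps j => eE n j.val

theorem g_rels (n : ℕ) : ∀ a b : FreeMonoid (IB2Gen n), ib2Rel n a b →
    FreeMonoid.lift (gfun n) a = FreeMonoid.lift (gfun n) b := by
  intro a b hrel
  cases hrel with
  | braid_comm i j h =>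
    simp only [map_mul, FreeMonoid.lift_eval_of, gfun]
    rcases h with h | h
    · exact (comm_comm (by omega)).eq
    · exact ((comm_comm (by omega)).symm).eq
  | braid i j h =>
    simp only [map_mul, FreeMonoid.lift_eval_of, gfun]
    rw [h]
    have hb := congrArg (Units.val) (braid_u (n := n) (i := i.val) (by omega))
    simpa only [Units.val_mul] using hb
  | inv_right i =>
    simp only [map_mul, FreeMonoid.lift_eval_of, gfun, map_one, Units.mul_inv]
  | inv_left i =>
    simp only [map_mul, FreeMonoid.lift_eval_of, gfun, map_one, Units.inv_mul]
  | eps_comm j i h =>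
    simp only [map_mul, FreeMonoid.lift_eval_of, gfun]
    obtain ⟨h1, h2⟩ := h
    rcases Nat.lt_or_ge j.val i.val with hlt | hge
    · exact (L1 j.val i.val (by omega)).eq
    · have : i.val + 2 ≤ j.val := by omega
      exact (L4 j.val (by have := j.isLt; omega) i.val this).eq
  | eps_shift₁ i =>
    simp only [map_mul, FreeMonoid.lift_eval_of, gfun]
    have h := L3' (n := n) i.val 1
    simpa only [mul_one] using h
  | eps_shift₂ i =>
    simp only [map_mul, FreeMonoid.lift_eval_of, gfun]
    have h := L3 (n := n) i.val 1
    simpa only [mul_one] using h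
  | idem j =>
    simp only [map_mul, FreeMonoid.lift_eval_of, gfun]
    have h := L5 (n := n) j.val 1
    simp only [mul_one] at h
    exact h.symm
  | eps_sq₁ i =>
    simp only [map_mul, FreeMonoid.lift_eval_of, gfun]
    show eE n (i.val+1) * ↑(sU n i.val) * ↑(sU n i.val) = eE n (i.val+1)
    simp only [eE, mul_assoc]
    rw [(L2 i.val).1]
  | eps_sq₂ i =>
    simp only [map_mul, FreeMonoid.lift_eval_of, gfun]
    show ↑(sU n i.val) * ↑(sU n i.val) * eE n (i.val+1) = eE n (i.val+1)
    simp only [eE, mul_assoc, Units.mul_inv_cancel_left]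
    rw [L2c]
  | eps_pair₁ i =>
    simp only [map_mul, FreeMonoid.lift_eval_of, gfun]
    show eE n i.val * eE n (i.val+1) * ↑(sU n i.val)
        = ↑(sU n i.val) * eE n i.val * eE n (i.val+1)
    have h1 := (L6 (n := n) i.val).1 1
    have h2 := (L6 (n := n) i.val).2 1
    simp only [mul_one] at h1 h2
    simp only [mul_assoc]
    rw [h1]; exact h2.symm
  | eps_pair₂ i =>
    simp only [map_mul, FreeMonoid.lift_eval_of, gfun]
    show eE n i.val * eE n (i.val+1) * ↑(sU n i.val) = eE n i.val * eE n (i.val+1)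
    have h1 := (L6 (n := n) i.val).1 1
    simp only [mul_one] at h1
    simp only [mul_assoc]
    rw [h1]

def psiHom (n : ℕ) : M2 n →* M1 n := PresentedMonoid.lift (gfun n) (g_rels n)

end IB16
namespace IB16

def fU (n : ℕ) (i : Fin (n-1)) : (M2 n)ˣ where
  val := PresentedMonoid.of _ (IB2Gen.sig i)
  inv := PresentedMonoid.of _ (IB2Gen.sinv i)
  val_inv := rel_eq (ib2Rel.inv_right i)
  inv_val := rel_eq (ib2Rel.inv_left i)

def fE (n : ℕ) (j : Fin n) : M2 n := PresentedMonoid.of _ (IB2Gen.eps j)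

def fE0 (n : ℕ) (i : Fin (n-1)) : M2 n := fE n ⟨i.val, by have := i.isLt; omega⟩
def fE1 (n : ℕ) (i : Fin (n-1)) : M2 n := fE n ⟨i.val + 1, by have := i.isLt; omega⟩

section m2lemmas
variable {n : ℕ}

theorem m1 (i : Fin (n-1)) : ∀ z : M2 n,
    fE1 n i * (↑(fU n i) * (↑(fU n i) * z)) = fE1 n i * z := by
  have h := rel_eq (ib2Rel.eps_sq₁ i)
  change fE1 n i * ↑(fU n i) * ↑(fU n i) = fE1 n i at h
  have hc := consify h
  simp only [mul_assoc] at hc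
  exact hc

theorem m2 (i : Fin (n-1)) : ∀ z : M2 n,
    ↑(fU n i) * (↑(fU n i) * (fE1 n i * z)) = fE1 n i * z := by
  have h := rel_eq (ib2Rel.eps_sq₂ i)
  change ↑(fU n i) * ↑(fU n i) * fE1 n i = fE1 n i at h
  have hc := consify h
  simp only [mul_assoc] at hc
  exact hc

theorem m3 (i : Fin (n-1)) : ∀ z : M2 n,
    fE0 n i * (↑(fU n i) * z) = ↑(fU n i) * (fE1 n i * z) := by
  have h := rel_eq (ib2Rel.eps_shift₁ i)
  change fE0 n i * ↑(fU n i) = ↑(fU n i) * fE1 n i at h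
  have hc := consify h
  simp only [mul_assoc] at hc
  exact hc

theorem m4 (i : Fin (n-1)) : ∀ z : M2 n,
    fE1 n i * (↑(fU n i) * z) = ↑(fU n i) * (fE0 n i * z) := by
  have h := rel_eq (ib2Rel.eps_shift₂ i)
  change fE1 n i * ↑(fU n i) = ↑(fU n i) * fE0 n i at h
  have hc := consify h
  simp only [mul_assoc] at hc
  exact hc

theorem m5 (i : Fin (n-1)) : ∀ z : M2 n,
    fE0 n i * (fE1 n i * (↑(fU n i) * z)) = ↑(fU n i) * (fE0 n i * (fE1 n i * z)) := by
  have h := rel_eq (ib2Rel.eps_pair₁ i)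
  change fE0 n i * fE1 n i * ↑(fU n i) = ↑(fU n i) * fE0 n i * fE1 n i at h
  have hc := consify h
  simp only [mul_assoc] at hc
  exact hc

theorem m6 (i : Fin (n-1)) : ∀ z : M2 n,
    fE0 n i * (fE1 n i * (↑(fU n i) * z)) = fE0 n i * (fE1 n i * z) := by
  have h := rel_eq (ib2Rel.eps_pair₂ i)
  change fE0 n i * fE1 n i * ↑(fU n i) = fE0 n i * fE1 n i at h
  have hc := consify h
  simp only [mul_assoc] at hc
  exact hc

theorem d1 (i : Fin (n-1)) : ∀ z : M2 n,
    fE1 n i * (↑(fU n i)⁻¹ * z) = fE1 n i * (↑(fU n i) * z) := by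
  intro z
  conv_lhs => rw [← m1 i (↑(fU n i)⁻¹ * z)]
  rw [Units.mul_inv_cancel_left]

theorem d2 (i : Fin (n-1)) : ∀ z : M2 n,
    ↑(fU n i) * (↑(fU n i) * (fE0 n i * z)) = fE0 n i * z := by
  intro z
  rw [← m4, ← d1, ← m3, Units.mul_inv_cancel_left]

theorem d3 (i : Fin (n-1)) : ∀ z : M2 n,
    fE0 n i * (↑(fU n i) * (↑(fU n i) * z)) = fE0 n i * z := by
  intro z
  rw [m3, ← d1, ← m3, Units.mul_inv_cancel_left]

theorem d0 (i : Fin (n-1)) : ∀ w : M2 n,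
    fE0 n i * w = ↑(fU n i) * (fE1 n i * (↑(fU n i)⁻¹ * w)) := by
  intro w
  calc fE0 n i * w = fE0 n i * (↑(fU n i) * (↑(fU n i)⁻¹ * w)) := by
        rw [Units.mul_inv_cancel_left]
    _ = ↑(fU n i) * (fE1 n i * (↑(fU n i)⁻¹ * w)) := m3 i _

theorem d5 (i : Fin (n-1)) : ∀ z : M2 n,
    fE1 n i * (fE0 n i * z) = fE0 n i * (fE1 n i * z) := by
  intro z
  rw [d0, m4, ← m5, Units.mul_inv_cancel_left]

theorem c1 (i : Fin (n-1)) : ∀ z : M2 n,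
    fE0 n i * (↑(fU n i) * (fE0 n i * z)) = fE0 n i * (fE1 n i * z) := by
  intro z
  rw [m3, d5, ← m5, m6]

theorem P1c (i : Fin (n-1)) : ∀ z : M2 n,
    fE0 n i * (↑(fU n i) * (fE0 n i * z))
      = ↑(fU n i) * (fE0 n i * (↑(fU n i) * (fE0 n i * z))) := by
  intro z
  rw [c1, ← m5, m6]

theorem P2c (i : Fin (n-1)) : ∀ z : M2 n,
    fE0 n i * (↑(fU n i) * (fE0 n i * z))
      = fE0 n i * (↑(fU n i) * (fE0 n i * (↑(fU n i) * z))) := by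
  intro z
  rw [c1, c1, m6]

end m2lemmas

end IB16
namespace IB16

def ffun (n : ℕ) (h0 : 0 < n) : IB1Gen n → M2 n
  | IB1Gen.sig i => ↑(fU n i)
  | IB1Gen.sinv i => ↑(fU n i)⁻¹
  | IB1Gen.eps => fE n ⟨0, h0⟩

theorem f_rels (n : ℕ) (h0 : 0 < n) : ∀ a b : FreeMonoid (IB1Gen n), ib1Rel n a b →
    FreeMonoid.lift (ffun n h0) a = FreeMonoid.lift (ffun n h0) b := by
  intro a b hrel
  cases hrel with
  | braid_comm i j h =>
    simp only [map_mul, FreeMonoid.lift_eval_of, ffun]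
    exact rel_eq (ib2Rel.braid_comm i j h)
  | braid i j h =>
    simp only [map_mul, FreeMonoid.lift_eval_of, ffun]
    exact rel_eq (ib2Rel.braid i j h)
  | inv_right i =>
    simp only [map_mul, FreeMonoid.lift_eval_of, ffun, map_one, Units.mul_inv]
  | inv_left i =>
    simp only [map_mul, FreeMonoid.lift_eval_of, ffun, map_one, Units.inv_mul]
  | eps_comm i h =>
    simp only [map_mul, FreeMonoid.lift_eval_of, ffun]
    exact rel_eq (ib2Rel.eps_comm ⟨0, h0⟩ i
      ⟨show (0:ℕ) ≠ i.val by omega, show (0:ℕ) ≠ i.val + 1 by omega⟩)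
  | eps_sig₁ h =>
    simp only [map_mul, FreeMonoid.lift_eval_of, ffun]
    have hp := P1c (n := n) ⟨0, h⟩ 1
    simp only [mul_one] at hp
    show fE0 n ⟨0, h⟩ * ↑(fU n ⟨0, h⟩) * fE0 n ⟨0, h⟩
      = ↑(fU n ⟨0, h⟩) * fE0 n ⟨0, h⟩ * ↑(fU n ⟨0, h⟩) * fE0 n ⟨0, h⟩
    simp only [mul_assoc]
    exact hp
  | eps_sig₂ h =>
    simp only [map_mul, FreeMonoid.lift_eval_of, ffun]
    have hp := P2c (n := n) ⟨0, h⟩ 1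
    simp only [mul_one] at hp
    show fE0 n ⟨0, h⟩ * ↑(fU n ⟨0, h⟩) * fE0 n ⟨0, h⟩
      = fE0 n ⟨0, h⟩ * ↑(fU n ⟨0, h⟩) * fE0 n ⟨0, h⟩ * ↑(fU n ⟨0, h⟩)
    simp only [mul_assoc]
    exact hp
  | idem =>
    simp only [map_mul, FreeMonoid.lift_eval_of, ffun]
    exact rel_eq (ib2Rel.idem ⟨0, h0⟩)
  | eps_sq₁ h =>
    simp only [map_mul, FreeMonoid.lift_eval_of, ffun]
    have hp := d3 (n := n) ⟨0, h⟩ 1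
    simp only [mul_one] at hp
    show fE0 n ⟨0, h⟩ = fE0 n ⟨0, h⟩ * ↑(fU n ⟨0, h⟩) * ↑(fU n ⟨0, h⟩)
    simp only [mul_assoc]
    exact hp.symm
  | eps_sq₂ h =>
    simp only [map_mul, FreeMonoid.lift_eval_of, ffun]
    have hp := d2 (n := n) ⟨0, h⟩ 1
    simp only [mul_one] at hp
    show fE0 n ⟨0, h⟩ = ↑(fU n ⟨0, h⟩) * ↑(fU n ⟨0, h⟩) * fE0 n ⟨0, h⟩
    simp only [mul_assoc]
    exact hp.symm

def phiHom (n : ℕ) (h0 : 0 < n) : M1 n →* M2 n :=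
  PresentedMonoid.lift (ffun n h0) (f_rels n h0)

end IB16
namespace IB16

theorem phi_eE (n : ℕ) (h0 : 0 < n) : ∀ m : ℕ, ∀ h : m < n,
    phiHom n h0 (eE n m) = fE n ⟨m, h⟩ := by
  intro m
  induction m with
  | zero => intro h; rfl
  | succ m ih =>
    intro h
    have hm : m < n - 1 := by omega
    simp only [eE, map_mul]
    rw [sU_pos hm, sU_inv_pos hm, ih (by omega)]
    have hφs : phiHom n h0 (PresentedMonoid.of _ (IB1Gen.sig ⟨m, hm⟩)) = ↑(fU n ⟨m, hm⟩) := rfl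
    have hφt : phiHom n h0 (PresentedMonoid.of _ (IB1Gen.sinv ⟨m, hm⟩)) = ↑(fU n ⟨m, hm⟩)⁻¹ := rfl
    rw [hφs, hφt]
    have hm3 := m3 (n := n) ⟨m, hm⟩ 1
    simp only [mul_one] at hm3
    have : fE0 n ⟨m, hm⟩ * ↑(fU n ⟨m, hm⟩) = ↑(fU n ⟨m, hm⟩) * fE1 n ⟨m, hm⟩ := hm3
    show ↑(fU n ⟨m, hm⟩)⁻¹ * fE0 n ⟨m, hm⟩ * ↑(fU n ⟨m, hm⟩) = fE1 n ⟨m, hm⟩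
    rw [mul_assoc, this, Units.inv_mul_cancel_left]

theorem psi_phi (n : ℕ) (h0 : 0 < n) : ∀ x : M1 n, psiHom n (phiHom n h0 x) = x := by
  have hc : (psiHom n).comp (phiHom n h0) = MonoidHom.id (M1 n) := by
    apply PresentedMonoid.ext
    intro x
    simp only [MonoidHom.comp_apply, MonoidHom.id_apply]
    cases x with
    | sig i =>
      show (↑(sU n i.val) : M1 n) = PresentedMonoid.of _ (IB1Gen.sig i)
      rw [sU_pos i.isLt, Fin.eta]
    | sinv i =>
      show (↑(sU n i.val)⁻¹ : M1 n) = PresentedMonoid.of _ (IB1Gen.sinv i)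
      rw [sU_inv_pos i.isLt, Fin.eta]
    | eps => rfl
  intro x
  simpa using DFunLike.congr_fun hc x

theorem phi_psi (n : ℕ) (h0 : 0 < n) : ∀ x : M2 n, phiHom n h0 (psiHom n x) = x := by
  have hc : (phiHom n h0).comp (psiHom n) = MonoidHom.id (M2 n) := by
    apply PresentedMonoid.ext
    intro x
    simp only [MonoidHom.comp_apply, MonoidHom.id_apply]
    cases x with
    | sig i =>
      show phiHom n h0 ↑(sU n i.val) = PresentedMonoid.of _ (IB2Gen.sig i)
      rw [sU_pos i.isLt]
      show (↑(fU n ⟨i.val, i.isLt⟩) : M2 n) = PresentedMonoid.of _ (IB2Gen.sig i)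
      rw [Fin.eta]
      rfl
    | sinv i =>
      show phiHom n h0 ↑(sU n i.val)⁻¹ = PresentedMonoid.of _ (IB2Gen.sinv i)
      rw [sU_inv_pos i.isLt]
      show (↑(fU n ⟨i.val, i.isLt⟩)⁻¹ : M2 n) = PresentedMonoid.of _ (IB2Gen.sinv i)
      rw [Fin.eta]
      rfl
    | eps j =>
      show phiHom n h0 (eE n j.val) = PresentedMonoid.of _ (IB2Gen.eps j)
      rw [phi_eE n h0 j.val j.isLt]
      show fE n ⟨j.val, j.isLt⟩ = PresentedMonoid.of _ (IB2Gen.eps j)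
      rw [Fin.eta]
      rfl
  intro x
  simpa using DFunLike.congr_fun hc x

end IB16

theorem inverse_braid_monoid_presentations (n : ℕ) (hn : 1 ≤ n) :
    ∃ e : InvBraidMonoid₁ n ≃* InvBraidMonoid₂ n,
      e (PresentedMonoid.of (ib1Rel n) IB1Gen.eps) =
        PresentedMonoid.of (ib2Rel n) (IB2Gen.eps ⟨0, by omega⟩) ∧
      ∀ i : Fin (n - 1),
        e (PresentedMonoid.of (ib1Rel n) (IB1Gen.sig i)) =
          PresentedMonoid.of (ib2Rel n) (IB2Gen.sig i) := by
  have h0 : 0 < n := hn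
  refine ⟨{ toFun := IB16.phiHom n h0
            invFun := IB16.psiHom n
            left_inv := IB16.psi_phi n h0
            right_inv := IB16.phi_psi n h0
            map_mul' := map_mul _ }, rfl, fun i => rfl⟩
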